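/- Let k ∈ A_c(Y) with symbol ℓ = π_c(k). Then: (i) the function φ_k(λ) = ∫_{Y×[−λ,∞)} k(y, x, y, x) dμ(y) dx − λ ∫_Y ℓ(y, y, 0) dμ(y) is constant for all sufficiently large λ, so the regularized trace τ₀^r(k) = lim_{λ→+∞} φ_k(λ) exists; (ii) the function (y, x) ↦ k(y, x, y, x) − χ⁰(x)·ℓ(y, y, 0) is integrable on Y × ℝ; and (iii) τ₀^r(k) = ∫_{Y×ℝ} ( k(y, x, y, x) − χ⁰(x) ℓ(y, y, 0) ) dμ(y) dx. -/

import Mathlib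

open MeasureTheory Filter

noncomputable section

/-- The indicator function of `(-∞, -λ] ⊆ ℝ`, complex-valued; `χ⁰ = chi 0`. -/
def chi (l : ℝ) (s : ℝ) : ℂ := if s ≤ -l then 1 else 0

/-- `ℓ` belongs to `B_c(Y)`: it is continuous and supported in `Y × Y × [-R, R]`
for some `R > 0`. -/
def MemBc {Y : Type*} [TopologicalSpace Y] (ℓ : Y → Y → ℝ → ℂ) : Prop :=
  Continuous (fun q : Y × Y × ℝ => ℓ q.1 q.2.1 q.2.2) ∧
    ∃ R > (0 : ℝ), ∀ y y' t, t ∉ Set.Icc (-R) R → ℓ y y' t = 0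

/-- `k` belongs to `A_c(Y)` with symbol `ℓ`. -/
def MemAc {Y : Type*} [TopologicalSpace Y] (k : Y × ℝ → Y × ℝ → ℂ)
    (ℓ : Y → Y → ℝ → ℂ) : Prop :=
  Continuous (fun q : (Y × ℝ) × (Y × ℝ) => k q.1 q.2) ∧
    ∃ l > (0 : ℝ),
      (∀ y s y' s', s ≤ -l → s' ≤ -l → k (y, s) (y', s') = ℓ y y' (s - s')) ∧
      HasCompactSupport (fun q : (Y × ℝ) × (Y × ℝ) =>
        if q.1.2 ≤ -l ∧ q.2.2 ≤ -l then 0 else k q.1 q.2)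

/-- The truncated trace
`φ_k(λ) = ∫_{Y×[−λ,∞)} k(y, x, y, x) dμ(y) dx − λ ∫_Y ℓ(y, y, 0) dμ(y)`. -/
def phiReg {Y : Type*} [MeasurableSpace Y] (μ : Measure Y)
    (k : Y × ℝ → Y × ℝ → ℂ) (ℓ : Y → Y → ℝ → ℂ) (l : ℝ) : ℂ :=
  (∫ p : Y × ℝ, (if -l ≤ p.2 then k p p else 0) ∂(μ.prod volume)) -
    (l : ℂ) * ∫ y, ℓ y y 0 ∂μ

/-- for `k ∈ A_c(Y)` with symbol `ℓ`: (i) `φ_k` is eventually constant,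
so the regularized trace `τ₀^r(k) = lim_{λ→+∞} φ_k(λ)` exists; (ii) the function
`(y, x) ↦ k(y, x, y, x) − χ⁰(x)·ℓ(y, y, 0)` is integrable on `Y × ℝ`; and
(iii) `τ₀^r(k)` equals its integral. -/
theorem regularized_trace_exists_and_integral_formula
    {Y : Type*} [MetricSpace Y] [CompactSpace Y] [MeasurableSpace Y] [BorelSpace Y]
    (μ : Measure Y) [IsFiniteMeasure μ]
    (k : Y × ℝ → Y × ℝ → ℂ) (ℓ : Y → Y → ℝ → ℂ)
    (hℓ : MemBc ℓ) (hk : MemAc k ℓ) :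
    ∃ c : ℂ,
      (∃ Λ : ℝ, ∀ l ≥ Λ, phiReg μ k ℓ l = c) ∧
      Tendsto (fun l => phiReg μ k ℓ l) atTop (nhds c) ∧
      Integrable (fun p : Y × ℝ => k p p - chi 0 p.2 * ℓ p.1 p.1 0) (μ.prod volume) ∧
      c = ∫ p : Y × ℝ, (k p p - chi 0 p.2 * ℓ p.1 p.1 0) ∂(μ.prod volume) := by
  obtain ⟨hkc, l₀, hl₀, hsym, hcs⟩ := hk
  obtain ⟨hℓc, R, hR, hℓsupp⟩ := hℓ
  -- continuity of the diagonal of k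
  have hdiag : Continuous fun p : Y × ℝ => k p p :=
    hkc.comp (continuous_id.prodMk continuous_id)
  have hℓdiag : Continuous fun y : Y => ℓ y y 0 :=
    hℓc.comp (continuous_id.prodMk (continuous_id.prodMk continuous_const))
  -- a bound r on the second coordinate of the support of the cut-off kernel
  obtain ⟨r0, hr0⟩ :=
    ((hcs.isCompact.image ((continuous_snd.comp continuous_fst)))).isBounded.subset_closedBall 0
  set r : ℝ := max r0 l₀ with hrdef
  have hrl₀ : l₀ ≤ r := le_max_right _ _
  have hrpos : 0 < r := lt_of_lt_of_le hl₀ hrl₀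
  have hkzero : ∀ y : Y, ∀ x : ℝ, r < x → k (y, x) (y, x) = 0 := by
    intro y x hx
    by_contra hne
    have hxpos : 0 < x := lt_trans hrpos hx
    have hmem : ((y, x), (y, x)) ∈
        tsupport (fun q : (Y × ℝ) × (Y × ℝ) =>
          if q.1.2 ≤ -l₀ ∧ q.2.2 ≤ -l₀ then 0 else k q.1 q.2) := by
      apply subset_tsupport
      simp only [Function.mem_support]
      have : ¬ (x ≤ -l₀ ∧ x ≤ -l₀) := by
        intro h
        linarith [h.1]
      rw [if_neg this]
      exact hne
    have : x ∈ Metric.closedBall (0:ℝ) r0 := hr0 ⟨_, hmem, rfl⟩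
    rw [Metric.mem_closedBall, Real.dist_eq, sub_zero] at this
    have := le_of_abs_le this
    have : x ≤ r := le_trans this (le_max_left _ _)
    linarith
  -- the integrand f and its vanishing outside Y × [-l₀, r]
  set f : Y × ℝ → ℂ := fun p => k p p - chi 0 p.2 * ℓ p.1 p.1 0 with hfdef
  have hchi1 : ∀ s : ℝ, s ≤ 0 → chi 0 s = 1 := by
    intro s hs; simp [chi, hs]
  have hchi0 : ∀ s : ℝ, 0 < s → chi 0 s = 0 := by
    intro s hs; simp only [chi, neg_zero]; rw [if_neg (by linarith)]
  have hf0 : ∀ p : Y × ℝ, p.2 ∉ Set.Icc (-l₀) r → f p = 0 := by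
    rintro ⟨y, x⟩ hx
    simp only [Set.mem_Icc, not_and_or, not_le] at hx
    rcases hx with hx | hx
    · have hx' : x ≤ -l₀ := le_of_lt hx
      have hk' : k (y, x) (y, x) = ℓ y y 0 := by
        have := hsym y x y x hx' hx'
        simpa using this
      have hx0 : x ≤ 0 := le_trans hx' (by linarith)
      simp [hfdef, hk', hchi1 x hx0]
    · have h1 : k (y, x) (y, x) = 0 := hkzero y x hx
      have h2 : chi 0 x = 0 := hchi0 x (lt_trans hrpos hx)
      simp [hfdef, h1, h2]
  -- measurability of f
  have hchim : Measurable (chi 0) := by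
    unfold chi
    exact Measurable.ite (measurableSet_le measurable_id measurable_const)
      measurable_const measurable_const
  have hfmeas : AEStronglyMeasurable f (μ.prod volume) := by
    apply AEStronglyMeasurable.sub hdiag.aestronglyMeasurable
    exact ((hchim.comp measurable_snd).mul
      (hℓdiag.measurable.comp measurable_fst)).aestronglyMeasurable
  -- bound for f
  obtain ⟨C₁, hC₁⟩ := ((isCompact_univ (X := Y)).prod
    (isCompact_Icc (a := -l₀) (b := r))).exists_bound_of_continuousOn hdiag.continuousOn
  obtain ⟨C₂, hC₂⟩ := (isCompact_univ (X := Y)).exists_bound_of_continuousOn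
    hℓdiag.continuousOn
  set s : Set (Y × ℝ) := Set.univ ×ˢ Set.Icc (-l₀) r with hsdef
  have hsmeas : MeasurableSet s := MeasurableSet.univ.prod measurableSet_Icc
  have hsfin : (μ.prod volume) s < ⊤ := by
    rw [hsdef, Measure.prod_prod]
    exact ENNReal.mul_lt_top (measure_lt_top μ _) (by simp)
  set C : ℝ := max (C₁ + C₂) 0 with hCdef
  have hCnn : 0 ≤ C := le_max_right _ _
  have hchinorm : ∀ x : ℝ, ‖chi 0 x‖ ≤ 1 := by
    intro x; unfold chi; split <;> simp
  have hbound : ∀ p : Y × ℝ, ‖f p‖ ≤ s.indicator (fun _ => C) p := by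
    intro p
    by_cases hp : p ∈ s
    · rw [Set.indicator_of_mem hp]
      have h1 : ‖k p p‖ ≤ C₁ := hC₁ p hp
      have h2 : ‖ℓ p.1 p.1 0‖ ≤ C₂ := hC₂ p.1 (Set.mem_univ _)
      have : ‖f p‖ ≤ ‖k p p‖ + ‖chi 0 p.2‖ * ‖ℓ p.1 p.1 0‖ := by
        rw [hfdef]
        calc ‖k p p - chi 0 p.2 * ℓ p.1 p.1 0‖
            ≤ ‖k p p‖ + ‖chi 0 p.2 * ℓ p.1 p.1 0‖ := norm_sub_le _ _
          _ = ‖k p p‖ + ‖chi 0 p.2‖ * ‖ℓ p.1 p.1 0‖ := by rw [norm_mul]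
      have hℓnn : 0 ≤ ‖ℓ p.1 p.1 0‖ := norm_nonneg _
      have : ‖f p‖ ≤ C₁ + C₂ := by
        have := mul_le_mul_of_nonneg_right (hchinorm p.2) hℓnn
        nlinarith [this]
      exact this.trans (le_max_left _ _)
    · have hp2 : p.2 ∉ Set.Icc (-l₀) r := by
        intro h; exact hp ⟨Set.mem_univ _, h⟩
      rw [Set.indicator_of_notMem hp, hf0 p hp2, norm_zero]
  have hCint : Integrable (s.indicator (fun _ => C)) (μ.prod volume) := by
    rw [integrable_indicator_iff hsmeas]
    exact integrableOn_const hsfin.ne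
  have hfint : Integrable f (μ.prod volume) :=
    Integrable.mono' hCint hfmeas (Filter.Eventually.of_forall hbound)
  -- the correction term and its integral
  have hℓint : Integrable (fun y => ℓ y y 0) μ := by
    refine Integrable.mono' (integrable_const C₂) hℓdiag.aestronglyMeasurable ?_
    exact Filter.Eventually.of_forall fun y => hC₂ y (Set.mem_univ _)
  have hindint : ∀ l : ℝ, Integrable
      (fun x : ℝ => if -l ≤ x ∧ x ≤ 0 then (1:ℂ) else 0) volume := by
    intro l
    have : (fun x : ℝ => if -l ≤ x ∧ x ≤ 0 then (1:ℂ) else 0)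
        = (Set.Icc (-l) 0).indicator (fun _ => (1:ℂ)) := by
      funext x
      simp [Set.indicator, Set.mem_Icc]
    rw [this, integrable_indicator_iff measurableSet_Icc]
    exact integrableOn_const (by simp)
  have hindval : ∀ l : ℝ, 0 ≤ l →
      (∫ x : ℝ, (if -l ≤ x ∧ x ≤ 0 then (1:ℂ) else 0)) = (l : ℂ) := by
    intro l hl
    have : (fun x : ℝ => if -l ≤ x ∧ x ≤ 0 then (1:ℂ) else 0)
        = (Set.Icc (-l) 0).indicator (fun _ => (1:ℂ)) := by
      funext x
      simp [Set.indicator, Set.mem_Icc]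
    rw [this, integral_indicator_const _ measurableSet_Icc]
    rw [measureReal_def, Real.volume_Icc]
    simp [ENNReal.toReal_ofReal hl, Complex.real_smul]
  -- eventual constancy
  have hconst : ∀ l : ℝ, l₀ ≤ l → phiReg μ k ℓ l = ∫ p, f p ∂(μ.prod volume) := by
    intro l hl
    have hlpos : 0 < l := lt_of_lt_of_le hl₀ hl
    have key : ∀ p : Y × ℝ, (if -l ≤ p.2 then k p p else 0)
        = f p + ℓ p.1 p.1 0 * (if -l ≤ p.2 ∧ p.2 ≤ 0 then 1 else 0) := by
      rintro ⟨y, x⟩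
      by_cases h1 : -l ≤ x
      · by_cases h2 : x ≤ 0
        · simp [hfdef, h1, h2, hchi1 x h2]
        · push_neg at h2
          simp [hfdef, h1, h2.not_ge, hchi0 x h2]
      · push_neg at h1
        have hx' : x ≤ -l₀ := by linarith
        have hk' : k (y, x) (y, x) = ℓ y y 0 := by simpa using hsym y x y x hx' hx'
        have hx0 : x ≤ 0 := by linarith
        simp [hfdef, h1.not_ge, hk', hchi1 x hx0]
    have hprodint : Integrable
        (fun p : Y × ℝ => ℓ p.1 p.1 0 * (if -l ≤ p.2 ∧ p.2 ≤ 0 then (1:ℂ) else 0))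
        (μ.prod volume) := hℓint.mul_prod (hindint l)
    unfold phiReg
    rw [show (fun p : Y × ℝ => if -l ≤ p.2 then k p p else 0)
        = fun p => f p + ℓ p.1 p.1 0 * (if -l ≤ p.2 ∧ p.2 ≤ 0 then 1 else 0) from
        funext key]
    rw [integral_add hfint hprodint]
    rw [integral_prod_mul (μ := μ) (ν := volume) (fun y => ℓ y y 0)
      (fun x => if -l ≤ x ∧ x ≤ 0 then (1:ℂ) else 0)]
    rw [hindval l hlpos.le]
    ring
  refine ⟨∫ p, f p ∂(μ.prod volume), ⟨l₀, hconst⟩, ?_, hfint, rfl⟩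
  exact tendsto_const_nhds.congr'
    ((eventually_ge_atTop l₀).mono fun l hl => (hconst l hl).symm)

end
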